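/- Let β ≥ γ ≥ 0 with β + γ > 1. Then for all real numbers k₁, k₂, the integral ∫_ℝ ⟨τ−k₁⟩^{-β} ⟨τ−k₂⟩^{-γ} dτ is finite and bounded by C · φ_β(⌊|k₁−k₂|⌋) / ⟨k₁−k₂⟩^{γ} with C depending only on β, γ. -/

import Mathlib

open MeasureTheory

/-- Japanese bracket `⟨x⟩ = (1+x²)^{1/2}`. -/
noncomputable def jb (x : ℝ) : ℝ := Real.sqrt (1 + x ^ 2)

/-- `φ_β(k) = Σ_{|n| ≤ |k|} ⟨n⟩^{-β}`. -/
noncomputable def phi (β : ℝ) (k : ℤ) : ℝ :=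
  ∑ n ∈ Finset.Icc (-|k|) |k|, jb n ^ (-β)

open Set

lemma jb_pos (x : ℝ) : 0 < jb x := Real.sqrt_pos.2 (by positivity)
lemma one_le_jb (x : ℝ) : 1 ≤ jb x := by
  rw [show (1:ℝ) = Real.sqrt 1 by simp]
  exact Real.sqrt_le_sqrt (by nlinarith [sq_nonneg x])
lemma jb_mono {x y : ℝ} (h : |x| ≤ |y|) : jb x ≤ jb y := by
  apply Real.sqrt_le_sqrt
  have hx := sq_abs x; have hy := sq_abs y
  nlinarith [abs_nonneg x]
lemma jb_abs (x : ℝ) : jb |x| = jb x := by simp [jb, sq_abs]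
lemma jb_rpow_nonneg (x c : ℝ) : 0 ≤ jb x ^ c := Real.rpow_nonneg (jb_pos x).le c
lemma jb_rpow_pos (x c : ℝ) : 0 < jb x ^ c := Real.rpow_pos_of_pos (jb_pos x) c
lemma jb_rpow_le_one {c : ℝ} (hc : 0 ≤ c) (x : ℝ) : jb x ^ (-c) ≤ 1 :=
  Real.rpow_le_one_of_one_le_of_nonpos (one_le_jb x) (neg_nonpos.2 hc)
lemma jb_rpow_anti {c x y : ℝ} (hc : 0 ≤ c) (h : jb x ≤ jb y) : jb y ^ (-c) ≤ jb x ^ (-c) :=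
  Real.rpow_le_rpow_of_nonpos (jb_pos x) h (neg_nonpos.2 hc)
lemma jb_rpow_add (x a b : ℝ) : jb x ^ (a + b) = jb x ^ a * jb x ^ b :=
  Real.rpow_add (jb_pos x) a b

lemma phi_pos (c : ℝ) (k : ℤ) : 0 < phi c k := by
  apply Finset.sum_pos (fun i _ => jb_rpow_pos _ _)
  exact ⟨0, by simp [abs_nonneg]⟩

lemma phi_nonneg (c : ℝ) (k : ℤ) : 0 ≤ phi c k := (phi_pos c k).le

lemma floor_abs_le {K : ℝ} (hK : 0 ≤ K) {n : ℤ} (hn : n ∈ Finset.Icc (-|⌊K⌋|) |⌊K⌋|) :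
    |(n:ℝ)| ≤ |K| := by
  simp only [Finset.mem_Icc] at hn
  have h0 : (0:ℤ) ≤ ⌊K⌋ := Int.floor_nonneg.2 hK
  rw [abs_of_nonneg h0] at hn
  have : |n| ≤ ⌊K⌋ := abs_le.2 hn
  have h2 : ((|n|:ℤ):ℝ) ≤ (⌊K⌋ : ℝ) := by exact_mod_cast this
  rw [abs_of_nonneg hK]
  calc |(n:ℝ)| = ((|n|:ℤ):ℝ) := by push_cast; rfl
  _ ≤ (⌊K⌋:ℝ) := h2
  _ ≤ K := Int.floor_le K

lemma phi_exp_le {c d K : ℝ} (hcd : c ≤ d) (hK : 0 ≤ K) :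
    phi c ⌊K⌋ ≤ jb K ^ (d - c) * phi d ⌊K⌋ := by
  unfold phi
  rw [Finset.mul_sum]
  apply Finset.sum_le_sum
  intro n hn
  have h1 : jb (n:ℝ) ≤ jb K := jb_mono (floor_abs_le hK hn)
  calc jb (n:ℝ) ^ (-c) = jb (n:ℝ) ^ (d - c) * jb (n:ℝ) ^ (-d) := by
        rw [← jb_rpow_add]; ring_nf
  _ ≤ jb K ^ (d - c) * jb (n:ℝ) ^ (-d) :=
      mul_le_mul_of_nonneg_right
        (Real.rpow_le_rpow (jb_pos _).le h1 (by linarith)) (jb_rpow_nonneg _ _)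

lemma jb_le_sqrt2_mul {K : ℝ} (hK : 0 ≤ K) : jb K ≤ Real.sqrt 2 * (2 * (⌊K⌋:ℝ) + 1) := by
  have h0 : (0:ℝ) ≤ (⌊K⌋:ℝ) := by exact_mod_cast Int.floor_nonneg.2 hK
  have hfl : K < (⌊K⌋:ℝ) + 1 := Int.lt_floor_add_one K
  have hmax : jb K ≤ Real.sqrt 2 * max 1 K := by
    rw [← Real.sqrt_sq (by positivity : (0:ℝ) ≤ max 1 K), ← Real.sqrt_mul (by norm_num)]
    apply Real.sqrt_le_sqrt
    have h1 : (1:ℝ) ≤ max 1 K := le_max_left _ _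
    have h2 : K ≤ max 1 K := le_max_right _ _
    nlinarith
  refine hmax.trans ?_
  have : max 1 K ≤ 2 * (⌊K⌋:ℝ) + 1 := by
    apply max_le <;> linarith
  nlinarith [Real.sqrt_nonneg 2]

lemma jb_le_phi {c K : ℝ} (hc : 0 ≤ c) (hK : 0 ≤ K) :
    jb K ^ (1 - c) ≤ Real.sqrt 2 * phi c ⌊K⌋ := by
  have h0 : (0:ℤ) ≤ ⌊K⌋ := Int.floor_nonneg.2 hK
  have hcard : ((2 * ⌊K⌋ + 1 : ℤ) : ℝ) * jb K ^ (-c) ≤ phi c ⌊K⌋ := by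
    unfold phi
    have : ∀ n ∈ Finset.Icc (-|⌊K⌋|) |⌊K⌋|, jb K ^ (-c) ≤ jb (n:ℝ) ^ (-c) :=
      fun n hn => jb_rpow_anti hc (jb_mono (floor_abs_le hK hn))
    calc ((2 * ⌊K⌋ + 1 : ℤ) : ℝ) * jb K ^ (-c)
        = (Finset.Icc (-|⌊K⌋|) |⌊K⌋|).card * jb K ^ (-c) := by
          rw [Int.card_Icc, abs_of_nonneg h0]
          congr 1
          exact_mod_cast (show (2 * ⌊K⌋ + 1 : ℤ) = ((⌊K⌋ + 1 - -⌊K⌋).toNat : ℤ) by omega)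
    _ ≤ ∑ n ∈ Finset.Icc (-|⌊K⌋|) |⌊K⌋|, jb (n:ℝ) ^ (-c) := by
          rw [← nsmul_eq_mul]
          exact Finset.card_nsmul_le_sum _ _ _ this
  calc jb K ^ (1 - c) = jb K * jb K ^ (-c) := by
        rw [show (1:ℝ) - c = 1 + -c by ring, jb_rpow_add, Real.rpow_one]
  _ ≤ (Real.sqrt 2 * (2 * (⌊K⌋:ℝ) + 1)) * jb K ^ (-c) :=
      mul_le_mul_of_nonneg_right (jb_le_sqrt2_mul hK) (jb_rpow_nonneg _ _)
  _ = Real.sqrt 2 * (((2 * ⌊K⌋ + 1 : ℤ):ℝ) * jb K ^ (-c)) := by push_cast; ring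
  _ ≤ Real.sqrt 2 * phi c ⌊K⌋ :=
      mul_le_mul_of_nonneg_left hcard (Real.sqrt_nonneg 2)
lemma jb_neg (x : ℝ) : jb (-x) = jb x := by simp [jb]
lemma jb_cont (c : ℝ) : Continuous fun x : ℝ => jb x ^ (-c) := by
  apply Continuous.rpow_const
  · exact (continuous_const.add (continuous_pow 2)).sqrt
  · exact fun x => Or.inl (jb_pos x).ne'
lemma jb_intInt (c a b : ℝ) : IntervalIntegrable (fun x => jb x ^ (-c)) volume a b :=
  (jb_cont c).intervalIntegrable a b

lemma step_le {c : ℝ} (hc : 0 ≤ c) {a : ℝ} (ha : 0 ≤ a) :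
    ∫ s in a..(a+1), jb s ^ (-c) ≤ jb a ^ (-c) := by
  have h : ∫ s in a..(a+1), jb s ^ (-c) ≤ ∫ s in a..(a+1), jb a ^ (-c) := by
    apply intervalIntegral.integral_mono_on (by linarith) (jb_intInt _ _ _)
      intervalIntegrable_const
    intro x hx
    exact jb_rpow_anti hc (jb_mono
      (by rw [abs_of_nonneg ha, abs_of_nonneg (by linarith [hx.1] : (0:ℝ) ≤ x)]; exact hx.1))
  simpa using h

lemma step_le_neg {c : ℝ} (hc : 0 ≤ c) {a : ℝ} (ha : 0 ≤ a) :
    ∫ s in (-(a+1))..(-a), jb s ^ (-c) ≤ jb a ^ (-c) := by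
  have h := intervalIntegral.integral_comp_neg (a := a) (b := a + 1)
    (fun x => jb x ^ (-c))
  simp only [jb_neg] at h
  rw [← h]
  exact step_le hc ha

lemma integral_symm_le {c : ℝ} (hc : 0 ≤ c) (n : ℕ) :
    ∫ s in (-(n+1:ℝ))..(n+1:ℝ), jb s ^ (-c) ≤
      2 * ∑ j ∈ Finset.range (n+1), jb (j:ℝ) ^ (-c) := by
  induction n with
  | zero =>
    simp only [Nat.cast_zero, zero_add, Finset.range_one, Finset.sum_singleton]
    have h : ∫ s in (-(1:ℝ))..(1:ℝ), jb s ^ (-c) ≤ ∫ s in (-(1:ℝ))..(1:ℝ), (1:ℝ) := by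
      apply intervalIntegral.integral_mono_on (by norm_num) (jb_intInt _ _ _)
        intervalIntegrable_const
      intro x _; exact jb_rpow_le_one hc x
    simp only [intervalIntegral.integral_const, smul_eq_mul, mul_one] at h
    have : jb (0:ℝ) = 1 := by simp [jb]
    rw [this, Real.one_rpow]
    linarith
  | succ n ih =>
    have hle1 : (-(n+1+1:ℝ)) ≤ (-(n+1:ℝ)) := by push_cast; linarith
    have e1 : (∫ s in (-(n+1+1:ℝ))..(-(n+1:ℝ)), jb s ^ (-c)) +
        ∫ s in (-(n+1:ℝ))..(n+1+1:ℝ), jb s ^ (-c) =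
        ∫ s in (-(n+1+1:ℝ))..(n+1+1:ℝ), jb s ^ (-c) :=
      intervalIntegral.integral_add_adjacent_intervals (jb_intInt _ _ _) (jb_intInt _ _ _)
    have e2 : (∫ s in (-(n+1:ℝ))..(n+1:ℝ), jb s ^ (-c)) +
        ∫ s in (n+1:ℝ)..(n+1+1:ℝ), jb s ^ (-c) =
        ∫ s in (-(n+1:ℝ))..(n+1+1:ℝ), jb s ^ (-c) :=
      intervalIntegral.integral_add_adjacent_intervals (jb_intInt _ _ _) (jb_intInt _ _ _)
    have hstep1 : ∫ s in (n+1:ℝ)..(n+1+1:ℝ), jb s ^ (-c) ≤ jb ((n+1:ℕ):ℝ) ^ (-c) := by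
      push_cast
      exact step_le hc (by positivity)
    have hstep2 : ∫ s in (-(n+1+1:ℝ))..(-(n+1:ℝ)), jb s ^ (-c) ≤ jb ((n+1:ℕ):ℝ) ^ (-c) := by
      push_cast
      exact step_le_neg hc (by positivity)
    rw [Finset.sum_range_succ]
    push_cast at *
    linarith
lemma sum_range_le_phi (c : ℝ) (n : ℕ) :
    ∑ j ∈ Finset.range (n+1), jb (j:ℝ) ^ (-c) ≤ phi c (n:ℤ) := by
  unfold phi
  rw [show |(n:ℤ)| = (n:ℤ) from abs_of_nonneg (by positivity)]
  rw [show ∑ j ∈ Finset.range (n+1), jb (j:ℝ) ^ (-c)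
      = ∑ m ∈ (Finset.range (n+1)).image (fun j : ℕ => (j:ℤ)), jb (m:ℝ) ^ (-c) by
    rw [Finset.sum_image (fun a _ b _ h => by exact_mod_cast h)]
    norm_num]
  apply Finset.sum_le_sum_of_subset_of_nonneg
  · intro m hm
    simp only [Finset.mem_image, Finset.mem_range] at hm
    obtain ⟨j, hj, rfl⟩ := hm
    simp only [Finset.mem_Icc]
    omega
  · intro _ _ _
    exact jb_rpow_nonneg _ _

lemma int_Icc_le_phi {c : ℝ} (hc : 0 ≤ c) {K : ℝ} (hK : 0 ≤ K) :
    ∫ s in Icc (-K) K, jb s ^ (-c) ≤ 2 * phi c ⌊K⌋ := by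
  set n := ⌊K⌋₊ with hn
  have hK1 : K ≤ (n:ℝ) + 1 := (Nat.lt_floor_add_one K).le
  have hsub : Icc (-K) K ⊆ Icc (-((n:ℝ)+1)) ((n:ℝ)+1) :=
    Icc_subset_Icc (by linarith) (by linarith)
  have hint : IntegrableOn (fun s => jb s ^ (-c)) (Icc (-((n:ℝ)+1)) ((n:ℝ)+1)) :=
    (jb_cont c).integrableOn_Icc
  have h1 : ∫ s in Icc (-K) K, jb s ^ (-c) ≤
      ∫ s in Icc (-((n:ℝ)+1)) ((n:ℝ)+1), jb s ^ (-c) :=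
    setIntegral_mono_set hint (Filter.Eventually.of_forall fun x => jb_rpow_nonneg x _)
      (HasSubset.Subset.eventuallyLE hsub)
  have h2 : ∫ s in Icc (-((n:ℝ)+1)) ((n:ℝ)+1), jb s ^ (-c) =
      ∫ s in (-((n:ℝ)+1))..((n:ℝ)+1), jb s ^ (-c) := by
    rw [intervalIntegral.integral_of_le (by linarith : -((n:ℝ)+1) ≤ (n:ℝ)+1),
      integral_Icc_eq_integral_Ioc]
  have h3 := integral_symm_le hc n
  have h4 : ∑ j ∈ Finset.range (n+1), jb (j:ℝ) ^ (-c) ≤ phi c ⌊K⌋ := by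
    rw [← Int.natCast_floor_eq_floor hK, ← hn]
    exact sum_range_le_phi c n
  linarith
lemma jb_ge_abs (x : ℝ) : |x| ≤ jb x := by
  rw [show |x| = Real.sqrt (x^2) by rw [Real.sqrt_sq_eq_abs]]
  exact Real.sqrt_le_sqrt (by linarith)

lemma jb_rpow_eq (x c : ℝ) : jb x ^ c = (1 + x ^ 2) ^ (c / 2) := by
  rw [jb, Real.sqrt_eq_rpow, ← Real.rpow_mul (by positivity)]
  ring_nf

lemma integrable_jb_rpow {p : ℝ} (hp : 1 < p) : Integrable fun x : ℝ => jb x ^ (-p) := by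
  have h := integrable_rpow_neg_one_add_norm_sq (E := ℝ) (μ := volume) (r := p)
    (by simpa using hp)
  refine h.congr ?_
  filter_upwards with x
  rw [jb_rpow_eq, Real.norm_eq_abs, sq_abs, neg_div]

lemma sqrt_two_pos : (0:ℝ) < Real.sqrt 2 := Real.sqrt_pos.2 (by norm_num)

lemma jb_le_sqrt2 {K : ℝ} (hK : |K| ≤ 1) : jb K ≤ Real.sqrt 2 := by
  apply Real.sqrt_le_sqrt
  nlinarith [sq_abs K, abs_nonneg K]

lemma int_Ioi_rpow_le {p K : ℝ} (hp : 1 < p) (hK : 0 < K) :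
    ∫ s in Ioi K, jb s ^ (-p) ≤ K ^ (1-p) / (p-1) := by
  have h1 : ∫ s in Ioi K, jb s ^ (-p) ≤ ∫ s in Ioi K, s ^ (-p) := by
    apply setIntegral_mono_on ((integrable_jb_rpow hp).integrableOn)
      (integrableOn_Ioi_rpow_of_lt (by linarith) hK) measurableSet_Ioi
    intro s hs
    have hs' : 0 < s := hK.trans hs
    exact Real.rpow_le_rpow_of_nonpos hs'
      ((le_abs_self s).trans (jb_ge_abs s)) (by linarith)
  rw [integral_Ioi_rpow_of_lt (by linarith) hK] at h1
  refine h1.trans_eq ?_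
  rw [show -p + 1 = 1 - p by ring]
  have hne : p - 1 ≠ 0 := by linarith
  have hne2 : (1:ℝ) - p ≠ 0 := by linarith
  generalize K ^ ((1:ℝ)-p) = X
  field_simp
  ring

lemma tail_Ioi {p K : ℝ} (hp : 1 < p) (hK : 0 ≤ K) :
    ∫ s in Ioi K, jb s ^ (-p) ≤
      Real.sqrt 2 ^ (p-1) * (1 + 1/(p-1)) * jb K ^ (1-p) := by
  have hp1 : 0 < p - 1 := by linarith
  have hpinv : 0 < 1/(p-1) := by positivity
  rcases le_or_gt 1 K with hK1 | hK1
  · have hKpos : 0 < K := by linarith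
    have h1 := int_Ioi_rpow_le hp hKpos
    have hjb : jb K / Real.sqrt 2 ≤ K := by
      rw [div_le_iff₀ sqrt_two_pos]
      calc jb K ≤ Real.sqrt (2 * K^2) := Real.sqrt_le_sqrt (by nlinarith)
      _ = Real.sqrt 2 * K := by
          rw [Real.sqrt_mul (by norm_num), Real.sqrt_sq (by linarith)]
      _ = K * Real.sqrt 2 := by ring
    have h2 : K ^ (1-p) ≤ (jb K / Real.sqrt 2) ^ (1-p) :=
      Real.rpow_le_rpow_of_nonpos (div_pos (jb_pos K) sqrt_two_pos) hjb (by linarith)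
    have h3 : (jb K / Real.sqrt 2) ^ (1-p) = Real.sqrt 2 ^ (p-1) * jb K ^ (1-p) := by
      rw [Real.div_rpow (jb_pos K).le (Real.sqrt_nonneg 2),
        show p - 1 = -(1-p) by ring, Real.rpow_neg (Real.sqrt_nonneg 2)]
      field_simp
    have h4 : (0:ℝ) ≤ Real.sqrt 2 ^ (p-1) * jb K ^ (1-p) :=
      mul_nonneg (Real.rpow_nonneg (Real.sqrt_nonneg 2) _) (jb_rpow_nonneg _ _)
    calc ∫ s in Ioi K, jb s ^ (-p) ≤ K ^ (1-p) / (p-1) := h1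
    _ ≤ (Real.sqrt 2 ^ (p-1) * jb K ^ (1-p)) * (1/(p-1)) := by
        rw [div_eq_mul_one_div]
        apply mul_le_mul_of_nonneg_right (h2.trans_eq h3) (by positivity)
    _ ≤ Real.sqrt 2 ^ (p-1) * (1 + 1/(p-1)) * jb K ^ (1-p) := by
        have := Real.rpow_nonneg (Real.sqrt_nonneg 2) (p-1)
        have := jb_rpow_nonneg K (1-p)
        nlinarith
  · have hsplit : Ioi K = Ioc K 1 ∪ Ioi (1:ℝ) := (Ioc_union_Ioi_eq_Ioi hK1.le).symm
    have hdisj : Disjoint (Ioc K 1) (Ioi (1:ℝ)) := by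
      rw [Set.disjoint_left]
      rintro x ⟨_, hx1⟩ hx2
      exact absurd hx2 (not_lt.2 hx1)
    have hIoc : ∫ s in Ioc K 1, jb s ^ (-p) ≤ 1 := by
      have hm : ∫ s in Ioc K 1, jb s ^ (-p) ≤ ∫ s in Ioc K 1, (1:ℝ) := by
        apply setIntegral_mono_on ((integrable_jb_rpow hp).integrableOn)
          ((integrableOn_const_iff).2 (Or.inr (by rw [Real.volume_Ioc]; exact ENNReal.ofReal_lt_top)))
          measurableSet_Ioc
        intro s _
        exact jb_rpow_le_one (by linarith) s
      rw [setIntegral_const, Real.volume_real_Ioc_of_le (by linarith : K ≤ 1), smul_eq_mul, mul_one] at hm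
      linarith
    have hIoi1 : ∫ s in Ioi (1:ℝ), jb s ^ (-p) ≤ 1/(p-1) := by
      have h := int_Ioi_rpow_le hp one_pos
      simpa [Real.one_rpow] using h
    have hunion : ∫ s in Ioi K, jb s ^ (-p) =
        (∫ s in Ioc K 1, jb s ^ (-p)) + ∫ s in Ioi (1:ℝ), jb s ^ (-p) := by
      rw [hsplit]
      exact setIntegral_union hdisj measurableSet_Ioi
        ((integrable_jb_rpow hp).integrableOn) ((integrable_jb_rpow hp).integrableOn)
    have hlow : (1:ℝ) ≤ Real.sqrt 2 ^ (p-1) * jb K ^ (1-p) := by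
      have hjb2 : jb K ≤ Real.sqrt 2 := jb_le_sqrt2 (by rw [abs_of_nonneg hK]; linarith)
      have h5 : Real.sqrt 2 ^ (1-p) ≤ jb K ^ (1-p) :=
        Real.rpow_le_rpow_of_nonpos (jb_pos K) hjb2 (by linarith)
      calc (1:ℝ) = Real.sqrt 2 ^ (p-1) * Real.sqrt 2 ^ (1-p) := by
            rw [← Real.rpow_add sqrt_two_pos, show p-1+(1-p) = 0 by ring, Real.rpow_zero]
      _ ≤ Real.sqrt 2 ^ (p-1) * jb K ^ (1-p) :=
          mul_le_mul_of_nonneg_left h5 (Real.rpow_nonneg (Real.sqrt_nonneg 2) _)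
    calc ∫ s in Ioi K, jb s ^ (-p) ≤ 1 + 1/(p-1) := by rw [hunion]; linarith
    _ = (1 + 1/(p-1)) * 1 := by ring
    _ ≤ (1 + 1/(p-1)) * (Real.sqrt 2 ^ (p-1) * jb K ^ (1-p)) :=
        mul_le_mul_of_nonneg_left hlow (by positivity)
    _ = Real.sqrt 2 ^ (p-1) * (1 + 1/(p-1)) * jb K ^ (1-p) := by ring
lemma tail_compl {p K : ℝ} (hp : 1 < p) (hK : 0 ≤ K) :
    ∫ s in (Icc (-K) K)ᶜ, jb s ^ (-p) ≤
      2 * (Real.sqrt 2 ^ (p-1) * (1 + 1/(p-1)) * jb K ^ (1-p)) := by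
  have hint1 : IntegrableOn (fun s => jb s ^ (-p)) (Iio (-K)) :=
    (integrable_jb_rpow hp).integrableOn
  have hint2 : IntegrableOn (fun s => jb s ^ (-p)) (Ioi K) :=
    (integrable_jb_rpow hp).integrableOn
  have hc : (Icc (-K) K)ᶜ = Iio (-K) ∪ Ioi K := by
    ext x
    simp only [mem_compl_iff, mem_Icc, not_and_or, not_le, mem_union, mem_Iio, mem_Ioi]
  rw [hc]
  have hdisj : Disjoint (Iio (-K)) (Ioi K) := by
    rw [Set.disjoint_left]
    intro x hx1 hx2
    simp only [mem_Iio, mem_Ioi] at hx1 hx2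
    linarith
  rw [setIntegral_union hdisj measurableSet_Ioi hint1 hint2]
  have hneg : ∫ s in Iio (-K), jb s ^ (-p) = ∫ s in Ioi K, jb s ^ (-p) := by
    rw [← integral_Iic_eq_integral_Iio]
    have h1 : ∫ x in Iic (-K), jb x ^ (-p) = ∫ x in Iic (-K), jb (-x) ^ (-p) := by
      apply setIntegral_congr_fun measurableSet_Iic
      intro x _
      simp only [jb_neg]
    rw [h1]
    have h2 := integral_comp_neg_Iic (-K) (fun y => jb y ^ (-p))
    rw [neg_neg] at h2
    exact h2
  have := tail_Ioi hp hK
  linarith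

lemma int_shift {H : ℝ → ℝ} {s : Set ℝ} (hs : MeasurableSet s) (k₀ : ℝ) :
    ∫ τ, ((fun τ => τ - k₀) ⁻¹' s).indicator (fun τ => H (τ - k₀)) τ = ∫ τ in s, H τ := by
  have heq : ∀ τ, ((fun τ => τ - k₀) ⁻¹' s).indicator (fun τ => H (τ - k₀)) τ
      = s.indicator H (τ - k₀) := fun τ => by
    by_cases h : τ - k₀ ∈ s <;> simp [Set.indicator, h, Set.mem_preimage]
  simp_rw [heq]
  rw [integral_sub_right_eq_self (fun τ => s.indicator H τ) k₀]
  exact integral_indicator hs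

lemma preimage_Icc (k₀ K : ℝ) :
    (fun τ => τ - k₀) ⁻¹' (Icc (-K) K) = Icc (k₀ - K) (k₀ + K) := by
  ext x
  simp only [Set.mem_preimage, mem_Icc]
  constructor <;> intro h <;> exact ⟨by linarith [h.1], by linarith [h.2]⟩

lemma mem_preimage_Icc_iff {k₀ K x : ℝ} :
    x ∈ (fun τ => τ - k₀) ⁻¹' (Icc (-K) K) ↔ |x - k₀| ≤ K := by
  simp only [Set.mem_preimage, mem_Icc]
  rw [abs_le]

lemma jb_half (K : ℝ) : jb K ≤ 2 * jb (K / 2) := by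
  rw [show (2:ℝ) * jb (K/2) = Real.sqrt (4 * (1 + (K/2)^2)) by
    rw [Real.sqrt_mul (by norm_num), show Real.sqrt 4 = 2 by
      rw [show (4:ℝ) = 2^2 by norm_num, Real.sqrt_sq (by norm_num)]]; rfl]
  exact Real.sqrt_le_sqrt (by nlinarith)

set_option maxHeartbeats 1000000 in
theorem integral_bracket_convolution_bound (β γ : ℝ) (hγ : 0 ≤ γ) (hβγ : γ ≤ β)
    (hsum : 1 < β + γ) :
    ∃ C : ℝ, 0 < C ∧ ∀ k₁ k₂ : ℝ,
      Integrable (fun τ : ℝ => jb (τ - k₁) ^ (-β) * jb (τ - k₂) ^ (-γ)) ∧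
      ∫ τ : ℝ, jb (τ - k₁) ^ (-β) * jb (τ - k₂) ^ (-γ)
        ≤ C * phi β ⌊|k₁ - k₂|⌋ / jb (k₁ - k₂) ^ γ := by
  have hβ : 0 < β := by linarith
  set p := β + γ with hp
  have hp1 : 1 < p := hsum
  set cp : ℝ := Real.sqrt 2 ^ (p-1) * (1 + 1/(p-1)) with hcp
  have hcppos : 0 < cp := by
    apply mul_pos (Real.rpow_pos_of_pos sqrt_two_pos _)
    have : 0 < 1/(p-1) := by
      apply div_pos one_pos; linarith
    linarith
  set C : ℝ := 2^(γ+1) + 2^(β+1) + 4 * cp * Real.sqrt 2 with hC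
  have hCpos : 0 < C := by
    have h1 : (0:ℝ) < 2^(γ+1) := Real.rpow_pos_of_pos (by norm_num) _
    have h2 : (0:ℝ) < 2^(β+1) := Real.rpow_pos_of_pos (by norm_num) _
    nlinarith [sqrt_two_pos]
  refine ⟨C, hCpos, fun k₁ k₂ => ?_⟩
  set K := |k₁ - k₂| with hKdef
  have hK0 : 0 ≤ K := abs_nonneg _
  have hjbeq : jb (k₁ - k₂) = jb K := (jb_abs _).symm
  set f := fun τ : ℝ => jb (τ - k₁) ^ (-β) * jb (τ - k₂) ^ (-γ) with hfdef
  have hfcont : Continuous f :=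
    ((jb_cont β).comp (continuous_id.sub continuous_const)).mul
      ((jb_cont γ).comp (continuous_id.sub continuous_const))
  have hfnonneg : ∀ τ, 0 ≤ f τ := fun τ =>
    mul_nonneg (jb_rpow_nonneg _ _) (jb_rpow_nonneg _ _)
  -- case bounds
  have hcase1 : ∀ τ : ℝ, |τ - k₁| ≤ |τ - k₂| → f τ ≤ jb (τ - k₁) ^ (-p) := by
    intro τ h
    have h1 : jb (τ - k₂) ^ (-γ) ≤ jb (τ - k₁) ^ (-γ) := jb_rpow_anti hγ (jb_mono h)
    calc f τ ≤ jb (τ - k₁) ^ (-β) * jb (τ - k₁) ^ (-γ) :=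
          mul_le_mul_of_nonneg_left h1 (jb_rpow_nonneg _ _)
    _ = jb (τ - k₁) ^ (-p) := by
        rw [← jb_rpow_add, show -β + -γ = -p by rw [hp]; ring]
  have hcase2 : ∀ τ : ℝ, |τ - k₂| ≤ |τ - k₁| → f τ ≤ jb (τ - k₂) ^ (-p) := by
    intro τ h
    have h1 : jb (τ - k₁) ^ (-β) ≤ jb (τ - k₂) ^ (-β) := jb_rpow_anti (by linarith) (jb_mono h)
    calc f τ ≤ jb (τ - k₂) ^ (-β) * jb (τ - k₂) ^ (-γ) :=
          mul_le_mul_of_nonneg_right h1 (jb_rpow_nonneg _ _)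
    _ = jb (τ - k₂) ^ (-p) := by
        rw [← jb_rpow_add, show -β + -γ = -p by rw [hp]; ring]
  -- integrability of f
  have hgint : Integrable (fun τ : ℝ => jb (τ - k₁) ^ (-p) + jb (τ - k₂) ^ (-p)) :=
    ((integrable_jb_rpow hp1).comp_sub_right k₁).add
      ((integrable_jb_rpow hp1).comp_sub_right k₂)
  have hfint : Integrable f := by
    apply hgint.mono' hfcont.aestronglyMeasurable
    filter_upwards with τ
    rw [Real.norm_eq_abs, abs_of_nonneg (hfnonneg τ)]
    rcases le_total |τ - k₁| |τ - k₂| with h | h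
    · exact (hcase1 τ h).trans (le_add_of_nonneg_right (jb_rpow_nonneg _ _))
    · exact (hcase2 τ h).trans (le_add_of_nonneg_left (jb_rpow_nonneg _ _))
  refine ⟨hfint, ?_⟩
  -- majorants
  set c₁ : ℝ := 2^γ * jb K ^ (-γ) with hc₁
  set c₃ : ℝ := 2^β * jb K ^ (-β) with hc₃
  have hc₁0 : 0 ≤ c₁ := mul_nonneg (Real.rpow_nonneg (by norm_num) _) (jb_rpow_nonneg _ _)
  have hc₃0 : 0 ≤ c₃ := mul_nonneg (Real.rpow_nonneg (by norm_num) _) (jb_rpow_nonneg _ _)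
  set S₁ : Set ℝ := (fun τ => τ - k₁) ⁻¹' (Icc (-K) K) with hS₁
  set S₂ : Set ℝ := (fun τ => τ - k₂) ⁻¹' (Icc (-K) K) with hS₂
  have hS₁m : MeasurableSet S₁ := (measurable_id.sub measurable_const) measurableSet_Icc
  have hS₂m : MeasurableSet S₂ := (measurable_id.sub measurable_const) measurableSet_Icc
  set u₁ := S₁.indicator (fun τ => c₁ * jb (τ - k₁) ^ (-β)) with hu₁def
  set u₂ := (S₁ᶜ).indicator (fun τ => jb (τ - k₁) ^ (-p)) with hu₂def
  set u₃ := S₂.indicator (fun τ => c₃ * jb (τ - k₂) ^ (-γ)) with hu₃def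
  set u₄ := (S₂ᶜ).indicator (fun τ => jb (τ - k₂) ^ (-p)) with hu₄def
  have hu₁0 : ∀ τ, 0 ≤ u₁ τ := fun τ =>
    Set.indicator_nonneg (fun x _ => mul_nonneg hc₁0 (jb_rpow_nonneg _ _)) τ
  have hu₂0 : ∀ τ, 0 ≤ u₂ τ := fun τ =>
    Set.indicator_nonneg (fun x _ => jb_rpow_nonneg _ _) τ
  have hu₃0 : ∀ τ, 0 ≤ u₃ τ := fun τ =>
    Set.indicator_nonneg (fun x _ => mul_nonneg hc₃0 (jb_rpow_nonneg _ _)) τ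
  have hu₄0 : ∀ τ, 0 ≤ u₄ τ := fun τ =>
    Set.indicator_nonneg (fun x _ => jb_rpow_nonneg _ _) τ
  -- integrability of majorants
  have hu₁int : Integrable u₁ := by
    rw [hu₁def, hS₁, preimage_Icc]
    exact ((continuous_const.mul ((jb_cont β).comp
      (continuous_id.sub continuous_const))).integrableOn_Icc).integrable_indicator
      measurableSet_Icc
  have hu₃int : Integrable u₃ := by
    rw [hu₃def, hS₂, preimage_Icc]
    exact ((continuous_const.mul ((jb_cont γ).comp
      (continuous_id.sub continuous_const))).integrableOn_Icc).integrable_indicator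
      measurableSet_Icc
  have hu₂int : Integrable u₂ :=
    ((integrable_jb_rpow hp1).comp_sub_right k₁).indicator hS₁m.compl
  have hu₄int : Integrable u₄ :=
    ((integrable_jb_rpow hp1).comp_sub_right k₂).indicator hS₂m.compl
  -- key distance fact
  have habs : ∀ τ : ℝ, K ≤ |τ - k₁| + |τ - k₂| := by
    intro τ
    calc K = |(τ - k₂) - (τ - k₁)| := by rw [hKdef]; congr 1; ring
    _ ≤ |τ - k₂| + |τ - k₁| := abs_sub _ _
    _ = |τ - k₁| + |τ - k₂| := by ring
  -- pointwise bound
  have hptw : ∀ τ, f τ ≤ u₁ τ + u₂ τ + u₃ τ + u₄ τ := by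
    intro τ
    rcases le_total |τ - k₁| |τ - k₂| with h | h
    · rcases le_or_gt |τ - k₁| K with h2 | h2
      · have hmem : τ ∈ S₁ := mem_preimage_Icc_iff.2 h2
        have hval : u₁ τ = c₁ * jb (τ - k₁) ^ (-β) := Set.indicator_of_mem hmem _
        have hKle : K / 2 ≤ |τ - k₂| := by
          have := habs τ; linarith
        have hjbb : jb K / 2 ≤ jb (τ - k₂) := by
          have h3 : jb (K/2) ≤ jb (τ - k₂) :=
            jb_mono (by rw [abs_of_nonneg (by linarith : (0:ℝ) ≤ K/2)]; exact hKle)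
          have := jb_half K
          linarith
        have h4 : jb (τ - k₂) ^ (-γ) ≤ (jb K / 2) ^ (-γ) :=
          Real.rpow_le_rpow_of_nonpos (div_pos (jb_pos K) two_pos) hjbb (neg_nonpos.2 hγ)
        have h5 : (jb K / 2) ^ (-γ) = c₁ := by
          rw [hc₁, Real.div_rpow (jb_pos K).le (by norm_num),
            Real.rpow_neg (by norm_num : (0:ℝ) ≤ 2), div_eq_mul_inv, inv_inv, mul_comm]
        have hle : f τ ≤ u₁ τ := by
          rw [hval]
          calc f τ ≤ jb (τ - k₁) ^ (-β) * c₁ := by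
                apply mul_le_mul_of_nonneg_left _ (jb_rpow_nonneg _ _)
                rw [← h5]; exact h4
          _ = c₁ * jb (τ - k₁) ^ (-β) := by ring
        linarith [hu₂0 τ, hu₃0 τ, hu₄0 τ]
      · have hmem : τ ∈ S₁ᶜ := by
          rw [mem_compl_iff]
          intro hx
          exact absurd (mem_preimage_Icc_iff.1 hx) (not_le.2 h2)
        have hval : u₂ τ = jb (τ - k₁) ^ (-p) := Set.indicator_of_mem hmem _
        have hle : f τ ≤ u₂ τ := by rw [hval]; exact hcase1 τ h
        linarith [hu₁0 τ, hu₃0 τ, hu₄0 τ]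
    · rcases le_or_gt |τ - k₂| K with h2 | h2
      · have hmem : τ ∈ S₂ := mem_preimage_Icc_iff.2 h2
        have hval : u₃ τ = c₃ * jb (τ - k₂) ^ (-γ) := Set.indicator_of_mem hmem _
        have hKle : K / 2 ≤ |τ - k₁| := by
          have := habs τ; linarith
        have hjbb : jb K / 2 ≤ jb (τ - k₁) := by
          have h3 : jb (K/2) ≤ jb (τ - k₁) :=
            jb_mono (by rw [abs_of_nonneg (by linarith : (0:ℝ) ≤ K/2)]; exact hKle)
          have := jb_half K
          linarith
        have h4 : jb (τ - k₁) ^ (-β) ≤ (jb K / 2) ^ (-β) :=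
          Real.rpow_le_rpow_of_nonpos (div_pos (jb_pos K) two_pos) hjbb (neg_nonpos.2 (by linarith))
        have h5 : (jb K / 2) ^ (-β) = c₃ := by
          rw [hc₃, Real.div_rpow (jb_pos K).le (by norm_num),
            Real.rpow_neg (by norm_num : (0:ℝ) ≤ 2), div_eq_mul_inv, inv_inv, mul_comm]
        have hle : f τ ≤ u₃ τ := by
          rw [hval]
          calc f τ ≤ c₃ * jb (τ - k₂) ^ (-γ) := by
                apply mul_le_mul_of_nonneg_right _ (jb_rpow_nonneg _ _)
                rw [← h5]; exact h4
          _ = c₃ * jb (τ - k₂) ^ (-γ) := rfl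
        linarith [hu₁0 τ, hu₂0 τ, hu₄0 τ]
      · have hmem : τ ∈ S₂ᶜ := by
          rw [mem_compl_iff]
          intro hx
          exact absurd (mem_preimage_Icc_iff.1 hx) (not_le.2 h2)
        have hval : u₄ τ = jb (τ - k₂) ^ (-p) := Set.indicator_of_mem hmem _
        have hle : f τ ≤ u₄ τ := by rw [hval]; exact hcase2 τ h
        linarith [hu₁0 τ, hu₂0 τ, hu₃0 τ]
  -- integral of majorants
  have hmono : ∫ τ, f τ ≤ ∫ τ, (u₁ τ + u₂ τ + u₃ τ + u₄ τ) :=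
    integral_mono hfint (((hu₁int.add hu₂int).add hu₃int).add hu₄int) hptw
  have hsplit : ∫ τ, (u₁ τ + u₂ τ + u₃ τ + u₄ τ) =
      (∫ τ, u₁ τ) + (∫ τ, u₂ τ) + (∫ τ, u₃ τ) + (∫ τ, u₄ τ) := by
    have h1 := integral_add ((hu₁int.add hu₂int).add hu₃int) hu₄int
    have h2 := integral_add (hu₁int.add hu₂int) hu₃int
    have h3 := integral_add hu₁int hu₂int
    simp only [Pi.add_apply] at h1 h2 h3
    rw [h1, h2, h3]
  -- evaluate each
  have e₁ : ∫ τ, u₁ τ = ∫ s in Icc (-K) K, c₁ * jb s ^ (-β) :=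
    int_shift (H := fun s => c₁ * jb s ^ (-β)) measurableSet_Icc k₁
  have e₂ : ∫ τ, u₂ τ = ∫ s in (Icc (-K) K)ᶜ, jb s ^ (-p) := by
    rw [hu₂def, hS₁, ← Set.preimage_compl]
    exact int_shift (H := fun s => jb s ^ (-p)) measurableSet_Icc.compl k₁
  have e₃ : ∫ τ, u₃ τ = ∫ s in Icc (-K) K, c₃ * jb s ^ (-γ) :=
    int_shift (H := fun s => c₃ * jb s ^ (-γ)) measurableSet_Icc k₂
  have e₄ : ∫ τ, u₄ τ = ∫ s in (Icc (-K) K)ᶜ, jb s ^ (-p) := by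
    rw [hu₄def, hS₂, ← Set.preimage_compl]
    exact int_shift (H := fun s => jb s ^ (-p)) measurableSet_Icc.compl k₂
  set Φ := phi β ⌊K⌋ with hΦ
  have hΦ0 : 0 < Φ := phi_pos β ⌊K⌋
  have b₁ : ∫ τ, u₁ τ ≤ c₁ * (2 * Φ) := by
    rw [e₁, integral_const_mul]
    exact mul_le_mul_of_nonneg_left (int_Icc_le_phi hβ.le hK0) hc₁0
  have b₃ : ∫ τ, u₃ τ ≤ c₃ * (2 * phi γ ⌊K⌋) := by
    rw [e₃, integral_const_mul]
    exact mul_le_mul_of_nonneg_left (int_Icc_le_phi hγ hK0) hc₃0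
  have b₂ : ∫ τ, u₂ τ ≤ 2 * (cp * jb K ^ (1-p)) := by
    rw [e₂]
    have := tail_compl hp1 hK0
    rw [← hcp] at this
    linarith
  have b₄ : ∫ τ, u₄ τ ≤ 2 * (cp * jb K ^ (1-p)) := by
    rw [e₄]
    have := tail_compl hp1 hK0
    rw [← hcp] at this
    linarith
  -- convert to target form
  have hphiγ : phi γ ⌊K⌋ ≤ jb K ^ (β - γ) * Φ := phi_exp_le hβγ hK0
  set X : ℝ := jb K ^ (-γ) * Φ with hX
  have hX0 : 0 ≤ X := mul_nonneg (jb_rpow_nonneg _ _) hΦ0.le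
  have b₁' : ∫ τ, u₁ τ ≤ 2^(γ+1) * X := by
    calc ∫ τ, u₁ τ ≤ c₁ * (2 * Φ) := b₁
    _ = 2^(γ+1) * X := by
        rw [hc₁, hX, show (2:ℝ)^(γ+1) = 2^γ * 2 by
          rw [Real.rpow_add (by norm_num : (0:ℝ) < 2), Real.rpow_one]]
        ring
  have b₃' : ∫ τ, u₃ τ ≤ 2^(β+1) * X := by
    calc ∫ τ, u₃ τ ≤ c₃ * (2 * phi γ ⌊K⌋) := b₃
    _ ≤ c₃ * (2 * (jb K ^ (β - γ) * Φ)) := by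
        apply mul_le_mul_of_nonneg_left _ hc₃0
        linarith
    _ = 2^β * 2 * (jb K ^ (-β) * jb K ^ (β - γ)) * Φ := by rw [hc₃]; ring
    _ = 2^(β+1) * X := by
        rw [← jb_rpow_add, show -β + (β-γ) = -γ by ring, hX,
          show (2:ℝ)^(β+1) = 2^β * 2 by
            rw [Real.rpow_add (by norm_num : (0:ℝ) < 2), Real.rpow_one]]
        ring
  have hsplitpow : jb K ^ (1-p) = jb K ^ (-γ) * jb K ^ (1-β) := by
    rw [← jb_rpow_add]
    congr 1
    rw [hp]; ring
  have hKφ : jb K ^ (1-β) ≤ Real.sqrt 2 * Φ := jb_le_phi hβ.le hK0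
  have btail : 2 * (cp * jb K ^ (1-p)) ≤ 2 * cp * Real.sqrt 2 * X := by
    rw [hsplitpow, hX]
    have h6 : jb K ^ (-γ) * jb K ^ (1-β) ≤ jb K ^ (-γ) * (Real.sqrt 2 * Φ) :=
      mul_le_mul_of_nonneg_left hKφ (jb_rpow_nonneg _ _)
    have h7 := mul_le_mul_of_nonneg_left h6
      (mul_nonneg (by norm_num : (0:ℝ) ≤ 2) hcppos.le)
    linarith
  have b₂' : ∫ τ, u₂ τ ≤ 2 * cp * Real.sqrt 2 * X := b₂.trans btail
  have b₄' : ∫ τ, u₄ τ ≤ 2 * cp * Real.sqrt 2 * X := b₄.trans btail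
  -- final assembly
  rw [hjbeq]
  have hgoal : C * Φ / jb K ^ γ = C * X := by
    rw [hX, show jb K ^ (-γ) = (jb K ^ γ)⁻¹ from Real.rpow_neg (jb_pos K).le γ,
      div_eq_mul_inv]
    ring
  rw [hgoal]
  have hCX : C * X = (2^(γ+1) + 2^(β+1) + 4 * cp * Real.sqrt 2) * X := by rw [hC]
  calc ∫ τ, f τ ≤ ∫ τ, (u₁ τ + u₂ τ + u₃ τ + u₄ τ) := hmono
  _ = (∫ τ, u₁ τ) + (∫ τ, u₂ τ) + (∫ τ, u₃ τ) + (∫ τ, u₄ τ) := hsplit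
  _ ≤ 2^(γ+1) * X + 2 * cp * Real.sqrt 2 * X + 2^(β+1) * X + 2 * cp * Real.sqrt 2 * X := by
      linarith
  _ = (2^(γ+1) + 2^(β+1) + 4 * cp * Real.sqrt 2) * X := by ring
  _ = C * X := hCX.symm
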